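/- Let Λ be the additive subgroup of ℝ^6 generated by Σ (the weight lattice). Then the reduction map Σ → Λ/2Λ is injective; equivalently, for distinct λ₁, λ₂ ∈ Σ the difference λ₁ − λ₂ does not lie in 2Λ. -/

import Mathlib

set_option maxRecDepth 10000


noncomputable section

/-- `ℝ^6` with the standard inner product. -/
abbrev E6V : Type := EuclideanSpace ℝ (Fin 6)

/-- Turn a plain function `Fin 6 → ℝ` into a vector of `E6V`. -/
def toE (f : Fin 6 → ℝ) : E6V := (WithLp.equiv 2 (Fin 6 → ℝ)).symm f

/-- The standard basis vector `e i`. -/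
def stdE (i : Fin 6) : E6V := EuclideanSpace.single i 1

/-- The set `Φ⁺` of positive roots of `E₆`: the 20 vectors `e i ± e j` for
`2 ≤ i < j ≤ 6` (zero-based: `1 ≤ i < j ≤ 5`), together with the 16 vectors
`(√3/2, ±1/2, ±1/2, ±1/2, ±1/2, ±1/2)` with an even number of minus signs. -/
def PhiPlus : Set E6V :=
  {v | ∃ i j : Fin 6, 0 < (i : ℕ) ∧ i < j ∧ (v = stdE i + stdE j ∨ v = stdE i - stdE j)} ∪
  {v | ∃ s : Fin 5 → ℝ, (∀ k, s k = 1 ∨ s k = -1) ∧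
      Even (Finset.univ.filter (fun k => s k = -1)).card ∧
      v = toE (Fin.cons (Real.sqrt 3 / 2) (fun k => s k / 2))}

/-- The set `Φ = Φ⁺ ∪ (−Φ⁺)` of all roots of `E₆`. -/
def Phi : Set E6V := PhiPlus ∪ (-PhiPlus)

/-- Orthogonal reflection in the vector `v`. -/
def reflectIn (v : E6V) (x : E6V) : E6V :=
  x - (2 * (inner ℝ x v : ℝ) / (inner ℝ v v : ℝ)) • v

/-- The minuscule weight `μ = ((2√3)/3, 0, 0, 0, 0, 0)`. -/
def muE6 : E6V := toE ![2 * Real.sqrt 3 / 3, 0, 0, 0, 0, 0]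

/-- The 27 weights of the minuscule representation of `E₆`: everything obtained
from `μ` by applying at most two root reflections. -/
def SigmaE6 : Set E6V :=
  {muE6} ∪ {x | ∃ v ∈ Phi, x = reflectIn v muE6} ∪
    {x | ∃ v ∈ Phi, ∃ w ∈ Phi, x = reflectIn v (reflectIn w muE6)}

/-! ### Auxiliary machinery -/

def vecR (a : ℝ) (u : Fin 5 → ℝ) : E6V := toE (Fin.cons a u)

lemma toE_apply (f : Fin 6 → ℝ) (i : Fin 6) : toE f i = f i := rfl

lemma toE_inj {f g : Fin 6 → ℝ} (h : ∀ i, f i = g i) : toE f = toE g :=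
  congrArg _ (funext h)

lemma vecR_congr {a b : ℝ} {u w : Fin 5 → ℝ} (h : a = b) (h' : ∀ k, u k = w k) :
    vecR a u = vecR b w := by
  refine toE_inj fun i => ?_
  induction i using Fin.cases with
  | zero => simpa using h
  | succ m => simpa using h' m

lemma inner_vecR (a b : ℝ) (u w : Fin 5 → ℝ) :
    (inner ℝ (vecR a u) (vecR b w) : ℝ) = a * b + ∑ k, u k * w k := by
  have : (inner ℝ (vecR a u) (vecR b w) : ℝ)
      = ∑ i : Fin 6, (Fin.cons a u : Fin 6 → ℝ) i * (Fin.cons b w : Fin 6 → ℝ) i := by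
    simp [vecR, toE, PiLp.inner_apply, RCLike.inner_apply, mul_comm]
  rw [this, Fin.sum_univ_succ]
  simp

lemma sub_smul_vecR (a b c : ℝ) (u w : Fin 5 → ℝ) :
    vecR a u - c • vecR b w = vecR (a - c * b) (fun k => u k - c * w k) := by
  refine toE_inj fun i => ?_
  induction i using Fin.cases <;> rfl

lemma reflect_vecR (a b : ℝ) (u w : Fin 5 → ℝ) :
    reflectIn (vecR b w) (vecR a u) =
      vecR (a - (2 * (a*b + ∑ k, u k * w k) / (b*b + ∑ k, w k * w k)) * b)
        (fun k => u k - (2 * (a*b + ∑ k, u k * w k) / (b*b + ∑ k, w k * w k)) * w k) := by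
  unfold reflectIn
  rw [inner_vecR, inner_vecR, sub_smul_vecR]

lemma reflect_neg (v x : E6V) : reflectIn (-v) x = reflectIn v x := by
  unfold reflectIn
  rw [inner_neg_neg, inner_neg_right]
  rw [show (2 * -(inner ℝ x v : ℝ) / (inner ℝ v v : ℝ))
      = -(2 * (inner ℝ x v : ℝ) / (inner ℝ v v : ℝ)) by ring]
  rw [neg_smul, smul_neg, neg_neg]

lemma stdE_succ (k : Fin 5) : stdE (Fin.succ k) = vecR 0 (fun m => if m = k then 1 else 0) := by
  have : stdE (Fin.succ k) = toE (fun j => if j = Fin.succ k then 1 else 0) := by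
    refine toE_inj fun i => ?_
    show (EuclideanSpace.single (Fin.succ k) (1:ℝ)) i = _
    rw [EuclideanSpace.single_apply]
  rw [this]
  refine toE_inj fun i => ?_
  induction i using Fin.cases with
  | zero => simp [Fin.cons_zero, (Fin.succ_ne_zero k).symm]
  | succ m => simp [Fin.cons_succ, Fin.succ_inj]

lemma muE6_eq : muE6 = vecR (2 * Real.sqrt 3 / 3) (fun _ => 0) := by
  refine toE_inj fun i => ?_
  fin_cases i <;> rfl

/-! ### Sign vector lemmas -/

lemma sign5_cases (t : Fin 5 → ℝ) (h : ∀ k, t k = 1 ∨ t k = -1) (hp : (∏ k, t k) = -1) :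
    (∑ k, t k = 3) ∨ (∑ k, t k = -1) ∨ (∀ k, t k = -1) := by
  rcases h 0 with h0|h0 <;> rcases h 1 with h1|h1 <;> rcases h 2 with h2|h2 <;>
    rcases h 3 with h3|h3 <;> rcases h 4 with h4|h4 <;>
  first
  | (left; rw [Fin.sum_univ_five, h0,h1,h2,h3,h4]; norm_num; done)
  | (right; left; rw [Fin.sum_univ_five, h0,h1,h2,h3,h4]; norm_num; done)
  | (right; right; intro k; fin_cases k <;> assumption)
  | (exfalso; rw [Fin.prod_univ_five, h0,h1,h2,h3,h4] at hp; norm_num at hp)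

lemma even_prod_one (s : Fin 5 → ℝ) (hs : ∀ k, s k = 1 ∨ s k = -1)
    (he : Even (Finset.univ.filter (fun k => s k = -1)).card) : (∏ k, s k) = 1 := by
  rw [← Finset.prod_filter_mul_prod_filter_not Finset.univ (fun k => s k = -1)]
  have h1 : ∏ k ∈ Finset.univ.filter (fun k => s k = -1), s k
      = (-1 : ℝ) ^ (Finset.univ.filter (fun k => s k = -1)).card := by
    rw [Finset.prod_congr rfl (fun k hk => (Finset.mem_filter.mp hk).2)]
    simp
  have h2 : ∏ k ∈ Finset.univ.filter (fun k => ¬ s k = -1), s k = 1 := by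
    refine Finset.prod_eq_one fun k hk => ?_
    rcases hs k with h|h
    · exact h
    · exact absurd h (Finset.mem_filter.mp hk).2
  rw [h1, h2, he.neg_one_pow, one_mul]

lemma prod_flip (u u' : Fin 5 → ℝ) (i j : Fin 5) (hij : i ≠ j)
    (h1 : u' i * u' j = u i * u j) (h2 : ∀ k, k ≠ i → k ≠ j → u' k = u k) :
    (∏ k, u' k) = ∏ k, u k := by
  have hju : j ∈ Finset.univ.erase i :=
    Finset.mem_erase.mpr ⟨fun h => hij h.symm, Finset.mem_univ j⟩
  have e1 : ∀ f : Fin 5 → ℝ,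
      (∏ k, f k) = f i * (f j * ∏ k ∈ (Finset.univ.erase i).erase j, f k) := by
    intro f
    rw [← Finset.mul_prod_erase Finset.univ f (Finset.mem_univ i),
        ← Finset.mul_prod_erase (Finset.univ.erase i) f hju]
  rw [e1 u', e1 u, ← mul_assoc, ← mul_assoc, h1]
  congr 1
  refine Finset.prod_congr rfl fun k hk => ?_
  have hk' := Finset.mem_erase.mp hk
  have hk'' := Finset.mem_erase.mp hk'.2
  exact h2 k hk''.1 hk'.1

/-! ### The families -/

def Fam2 : Set E6V :=
  {x | ∃ u : Fin 5 → ℝ, (∀ k, u k = 1 ∨ u k = -1) ∧ (∏ k, u k) = -1 ∧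
      x = vecR (Real.sqrt 3 / 6) (fun k => u k / 2)}

def Fam3 : Set E6V :=
  {x | ∃ t : Fin 5 → ℝ, (∀ k, t k = 0 ∨ t k = 1 ∨ t k = -1) ∧ (∑ k, t k ^ 2) = 1 ∧
      x = vecR (-(Real.sqrt 3 / 3)) t}

def LL : Set E6V := ({muE6} ∪ Fam2) ∪ Fam3


/-! ### Reflections by type-1 roots -/

def wfun (i j : Fin 5) (pm : ℝ) : Fin 5 → ℝ :=
  fun m => (if m = i then 1 else 0) + pm * (if m = j then 1 else 0)

lemma sum_mul_wfun (u : Fin 5 → ℝ) (i j : Fin 5) (pm : ℝ) :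
    ∑ k, u k * wfun i j pm k = u i + pm * u j := by
  unfold wfun
  simp only [mul_add, Finset.sum_add_distrib, mul_ite, mul_one, mul_zero]
  rw [Finset.sum_ite_eq' Finset.univ i u, Finset.sum_ite_eq' Finset.univ j (fun k => u k * pm)]
  simp [mul_comm]

lemma sum_wfun_sq (i j : Fin 5) (hij : i ≠ j) (pm : ℝ) (hpm : pm = 1 ∨ pm = -1) :
    ∑ k, wfun i j pm k * wfun i j pm k = 2 := by
  have key : ∀ k, wfun i j pm k * wfun i j pm k
      = (if k = i then 1 else 0) + (if k = j then pm * pm else 0) := by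
    intro k
    unfold wfun
    by_cases h1 : k = i
    · subst h1
      have h2 : ¬ k = j := hij
      simp [h2]
    · by_cases h2 : k = j
      · subst h2
        have h1' : ¬ k = i := h1
        simp [h1']
      · simp [h1, h2]
  rw [Finset.sum_congr rfl (fun k _ => key k), Finset.sum_add_distrib,
    Finset.sum_ite_eq' Finset.univ i (fun _ => (1:ℝ)),
    Finset.sum_ite_eq' Finset.univ j (fun _ => pm * pm)]
  rcases hpm with h|h <;> norm_num [h]

lemma reflect_t1 (i j : Fin 5) (hij : i ≠ j) (pm : ℝ) (hpm : pm = 1 ∨ pm = -1)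
    (x : E6V) (hx : x ∈ ({muE6} : Set E6V) ∪ Fam2) :
    reflectIn (vecR 0 (wfun i j pm)) x ∈ ({muE6} : Set E6V) ∪ Fam2 := by
  rcases hx with hx | ⟨u, hu, hup, hxe⟩
  · -- x = μ
    left
    have : reflectIn (vecR 0 (wfun i j pm)) muE6 = muE6 := by
      conv_lhs => rw [muE6_eq]
      rw [reflect_vecR]
      rw [muE6_eq]
      refine vecR_congr ?_ fun k => ?_ <;> simp
    rw [Set.mem_singleton_iff.mp hx, this]
    rfl
  · right
    rw [hxe, reflect_vecR, sum_mul_wfun, sum_wfun_sq i j hij pm hpm]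
    refine ⟨fun k => u k - (u i + pm * u j) * wfun i j pm k, ?_, ?_, ?_⟩
    · intro k
      show u k - (u i + pm * u j) * wfun i j pm k = 1
        ∨ u k - (u i + pm * u j) * wfun i j pm k = -1
      by_cases h1 : k = i
      · subst h1
        have hkj : ¬ k = j := hij
        have val : u k - (u k + pm * u j) * wfun k j pm k = -(pm * u j) := by
          unfold wfun; rw [if_pos rfl, if_neg hkj]; ring
        rw [val]
        rcases hpm with h|h <;> rcases hu j with h'|h' <;> rw [h, h'] <;> norm_num
      · by_cases h2 : k = j
        · subst h2
          have val : u k - (u i + pm * u k) * wfun i k pm k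
              = u k - pm * u i - pm * pm * u k := by
            unfold wfun; rw [if_pos rfl, if_neg h1]; ring
          rw [val]
          rcases hpm with h|h <;> rcases hu i with h'|h' <;> rcases hu k with h''|h'' <;>
            rw [h, h', h''] <;> norm_num
        · have val : u k - (u i + pm * u j) * wfun i j pm k = u k := by
            unfold wfun; rw [if_neg h1, if_neg h2]; ring
          rw [val]; exact hu k
    · show (∏ k, (u k - (u i + pm * u j) * wfun i j pm k)) = -1
      rw [← hup]
      refine prod_flip _ _ i j hij ?_ ?_
      · have e1 : u i - (u i + pm * u j) * wfun i j pm i = -(pm * u j) := by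
          unfold wfun; rw [if_pos rfl, if_neg hij]; ring
        have e2 : u j - (u i + pm * u j) * wfun i j pm j
            = u j - pm * u i - pm * pm * u j := by
          unfold wfun; rw [if_pos rfl, if_neg (fun h => hij h.symm)]; ring
        rw [e1, e2]
        rcases hpm with h|h <;> rw [h] <;> ring
      · intro k hk1 hk2
        unfold wfun; rw [if_neg hk1, if_neg hk2]; ring
    · refine vecR_congr (by simp) fun k => ?_
      show u k / 2 - (2 * (Real.sqrt 3 / 6 * 0 + (u i / 2 + pm * (u j / 2))) / (0 * 0 + 2))
          * wfun i j pm k = (u k - (u i + pm * u j) * wfun i j pm k) / 2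
      ring


/-! ### Reflections by type-2 roots -/

lemma sqrt3_sq : Real.sqrt 3 * Real.sqrt 3 = 3 := Real.mul_self_sqrt (by norm_num)

lemma sum_halves_sq (s : Fin 5 → ℝ) (hs : ∀ k, s k = 1 ∨ s k = -1) :
    ∑ k, s k / 2 * (s k / 2) = 5 / 4 := by
  have : ∀ k : Fin 5, s k / 2 * (s k / 2) = 1 / 4 := by
    intro k; rcases hs k with h|h <;> rw [h] <;> norm_num
  rw [Finset.sum_congr rfl fun k _ => this k]
  simp only [Finset.sum_const, Finset.card_univ, Fintype.card_fin, nsmul_eq_mul]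
  norm_num

lemma reflect_t2_mu (s : Fin 5 → ℝ) (hs : ∀ k, s k = 1 ∨ s k = -1) (hps : (∏ k, s k) = 1) :
    reflectIn (vecR (Real.sqrt 3 / 2) (fun k => s k / 2)) muE6 ∈ ({muE6} : Set E6V) ∪ Fam2 := by
  have h3 := sqrt3_sq
  have e2 : Real.sqrt 3 / 2 * (Real.sqrt 3 / 2) = 3 / 4 := by linear_combination (1/4) * h3
  have hSss := sum_halves_sq s hs
  · rw [muE6_eq, reflect_vecR]
    have e1 : 2 * Real.sqrt 3 / 3 * (Real.sqrt 3 / 2) = 1 := by linear_combination (1/3) * h3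
    have hC : 2 * (2 * Real.sqrt 3 / 3 * (Real.sqrt 3 / 2) + ∑ k, (0:ℝ) * (s k / 2)) /
        (Real.sqrt 3 / 2 * (Real.sqrt 3 / 2) + ∑ k, s k / 2 * (s k / 2)) = 1 := by
      rw [e1, e2, hSss]; norm_num
    right
    refine ⟨fun k => -s k, fun k => ?_, ?_, ?_⟩
    · show -s k = 1 ∨ -s k = -1
      rcases hs k with h|h <;> rw [h] <;> norm_num
    · have : (fun k => -s k) = fun k => (-1 : ℝ) * s k := funext fun k => by ring
      rw [this, Finset.prod_mul_distrib, hps, Finset.prod_const]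
      norm_num
    · refine vecR_congr ?_ fun k => ?_
      · show 2 * Real.sqrt 3 / 3 - 2 * (2 * Real.sqrt 3 / 3 * (Real.sqrt 3 / 2)
            + ∑ k, (0:ℝ) * (s k / 2)) / (Real.sqrt 3 / 2 * (Real.sqrt 3 / 2)
            + ∑ k, s k / 2 * (s k / 2)) * (Real.sqrt 3 / 2) = Real.sqrt 3 / 6
        rw [hC]; ring
      · show (0:ℝ) - 2 * (2 * Real.sqrt 3 / 3 * (Real.sqrt 3 / 2)
            + ∑ k, (0:ℝ) * (s k / 2)) / (Real.sqrt 3 / 2 * (Real.sqrt 3 / 2)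
            + ∑ k, s k / 2 * (s k / 2)) * (s k / 2) = -s k / 2
        rw [hC]; ring

lemma reflect_t2 (s : Fin 5 → ℝ) (hs : ∀ k, s k = 1 ∨ s k = -1) (hps : (∏ k, s k) = 1)
    (x : E6V) (hx : x ∈ ({muE6} : Set E6V) ∪ Fam2) :
    reflectIn (vecR (Real.sqrt 3 / 2) (fun k => s k / 2)) x ∈ LL := by
  have h3 := sqrt3_sq
  have e2 : Real.sqrt 3 / 2 * (Real.sqrt 3 / 2) = 3 / 4 := by linear_combination (1/4) * h3
  have hSss := sum_halves_sq s hs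
  rcases hx with hx | ⟨u, hu, hup, hxe⟩
  · rw [Set.mem_singleton_iff.mp hx]
    exact Set.mem_union_left _ (reflect_t2_mu s hs hps)
  · -- x ∈ Fam2
    rw [hxe, reflect_vecR]
    have e3 : Real.sqrt 3 / 6 * (Real.sqrt 3 / 2) = 1 / 4 := by linear_combination (1/12) * h3
    have hSus : ∑ k, u k / 2 * (s k / 2) = (∑ k, u k * s k) / 4 := by
      rw [Finset.sum_div]; exact Finset.sum_congr rfl fun k _ => by ring
    have hC : 2 * (Real.sqrt 3 / 6 * (Real.sqrt 3 / 2) + ∑ k, u k / 2 * (s k / 2)) /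
        (Real.sqrt 3 / 2 * (Real.sqrt 3 / 2) + ∑ k, s k / 2 * (s k / 2))
        = (1 + ∑ k, u k * s k) / 4 := by
      rw [e3, e2, hSss, hSus]; ring
    have ht : ∀ k, u k * s k = 1 ∨ u k * s k = -1 := by
      intro k; rcases hu k with h|h <;> rcases hs k with h'|h' <;> rw [h, h'] <;> norm_num
    have htp : (∏ k, u k * s k) = -1 := by
      rw [Finset.prod_mul_distrib, hup, hps]; norm_num
    rcases sign5_cases (fun k => u k * s k) ht htp with hsum | hsum | hall
    · -- P = 3 : result in Fam3
      right
      refine ⟨fun k => (u k - s k) / 2, fun k => ?_, ?_, ?_⟩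
      · show (u k - s k) / 2 = 0 ∨ (u k - s k) / 2 = 1 ∨ (u k - s k) / 2 = -1
        rcases hu k with h|h <;> rcases hs k with h'|h' <;> rw [h, h'] <;> norm_num
      · have e : ∀ k : Fin 5, ((u k - s k) / 2) ^ 2 = (2 - 2 * (u k * s k)) / 4 := by
          intro k; rcases hu k with h|h <;> rcases hs k with h'|h' <;> rw [h, h'] <;> norm_num
        rw [Finset.sum_congr rfl fun k _ => e k, ← Finset.sum_div, Finset.sum_sub_distrib,
          ← Finset.mul_sum, hsum]
        simp only [Finset.sum_const, Finset.card_univ, Fintype.card_fin, nsmul_eq_mul]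
        norm_num
      · refine vecR_congr ?_ fun k => ?_
        · show Real.sqrt 3 / 6 - 2 * (Real.sqrt 3 / 6 * (Real.sqrt 3 / 2)
              + ∑ k, u k / 2 * (s k / 2)) / (Real.sqrt 3 / 2 * (Real.sqrt 3 / 2)
              + ∑ k, s k / 2 * (s k / 2)) * (Real.sqrt 3 / 2) = -(Real.sqrt 3 / 3)
          rw [hC, hsum]; ring
        · show u k / 2 - 2 * (Real.sqrt 3 / 6 * (Real.sqrt 3 / 2)
              + ∑ k, u k / 2 * (s k / 2)) / (Real.sqrt 3 / 2 * (Real.sqrt 3 / 2)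
              + ∑ k, s k / 2 * (s k / 2)) * (s k / 2) = (u k - s k) / 2
          rw [hC, hsum]; ring
    · -- P = -1 : fixed
      left; right
      refine ⟨u, hu, hup, ?_⟩
      refine vecR_congr ?_ fun k => ?_
      · show Real.sqrt 3 / 6 - 2 * (Real.sqrt 3 / 6 * (Real.sqrt 3 / 2)
            + ∑ k, u k / 2 * (s k / 2)) / (Real.sqrt 3 / 2 * (Real.sqrt 3 / 2)
            + ∑ k, s k / 2 * (s k / 2)) * (Real.sqrt 3 / 2) = Real.sqrt 3 / 6
        rw [hC, hsum]; ring
      · show u k / 2 - 2 * (Real.sqrt 3 / 6 * (Real.sqrt 3 / 2)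
            + ∑ k, u k / 2 * (s k / 2)) / (Real.sqrt 3 / 2 * (Real.sqrt 3 / 2)
            + ∑ k, s k / 2 * (s k / 2)) * (s k / 2) = u k / 2
        rw [hC, hsum]; ring
    · -- all u k * s k = -1 : result μ
      have hs' : ∀ k, s k = -u k := by
        intro k
        have hk := hall k
        rcases hu k with h|h <;> rcases hs k with h'|h' <;> rw [h, h'] at hk ⊢ <;>
          (try norm_num at hk) <;> norm_num
      have hsum : (∑ k, u k * s k) = -5 := by
        rw [Finset.sum_congr rfl fun k _ => hall k]
        simp
      left; left
      rw [Set.mem_singleton_iff, muE6_eq]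
      refine vecR_congr ?_ fun k => ?_
      · show Real.sqrt 3 / 6 - 2 * (Real.sqrt 3 / 6 * (Real.sqrt 3 / 2)
            + ∑ k, u k / 2 * (s k / 2)) / (Real.sqrt 3 / 2 * (Real.sqrt 3 / 2)
            + ∑ k, s k / 2 * (s k / 2)) * (Real.sqrt 3 / 2) = 2 * Real.sqrt 3 / 3
        rw [hC, hsum]; ring
      · show u k / 2 - 2 * (Real.sqrt 3 / 6 * (Real.sqrt 3 / 2)
            + ∑ k, u k / 2 * (s k / 2)) / (Real.sqrt 3 / 2 * (Real.sqrt 3 / 2)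
            + ∑ k, s k / 2 * (s k / 2)) * (s k / 2) = 0
        rw [hC, hsum, hs' k]; ring


/-! ### Assembling: `SigmaE6 ⊆ LL` -/

lemma stdE_comb (i j : Fin 5) (pm : ℝ) :
    stdE (Fin.succ i) + pm • stdE (Fin.succ j) = vecR 0 (wfun i j pm) := by
  rw [stdE_succ, stdE_succ]
  have : pm • vecR 0 (fun m => if m = j then (1:ℝ) else 0)
      = vecR 0 (fun m => pm * (if m = j then 1 else 0)) := by
    refine toE_inj fun ii => ?_
    induction ii using Fin.cases with
    | zero => show pm * 0 = 0; ring
    | succ m => rfl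
  rw [this]
  refine toE_inj fun ii => ?_
  induction ii using Fin.cases with
  | zero => show (0:ℝ) + 0 = 0; ring
  | succ m => rfl

lemma reflect_pp (v : E6V) (hv : v ∈ PhiPlus) (x : E6V)
    (hx : x ∈ ({muE6} : Set E6V) ∪ Fam2) : reflectIn v x ∈ LL := by
  rcases hv with ⟨i, j, hi, hij, hv | hv⟩ | ⟨s, hs, he, hv⟩
  · -- e_i + e_j
    induction i using Fin.cases with
    | zero => simp at hi
    | succ i' =>
      induction j using Fin.cases with
      | zero => exact absurd hij (by simp [Fin.not_lt, Fin.zero_le])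
      | succ j' =>
        have hij' : i' ≠ j' := ne_of_lt (by rwa [Fin.succ_lt_succ_iff] at hij)
        have hve : v = vecR 0 (wfun i' j' 1) := by
          rw [hv, ← stdE_comb i' j' 1, one_smul]
        rw [hve]
        exact Set.mem_union_left _ (reflect_t1 i' j' hij' 1 (Or.inl rfl) x hx)
  · -- e_i - e_j
    induction i using Fin.cases with
    | zero => simp at hi
    | succ i' =>
      induction j using Fin.cases with
      | zero => exact absurd hij (by simp [Fin.not_lt, Fin.zero_le])
      | succ j' =>
        have hij' : i' ≠ j' := ne_of_lt (by rwa [Fin.succ_lt_succ_iff] at hij)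
        have hve : v = vecR 0 (wfun i' j' (-1)) := by
          rw [hv, ← stdE_comb i' j' (-1), neg_one_smul, ← sub_eq_add_neg]
        rw [hve]
        exact Set.mem_union_left _ (reflect_t1 i' j' hij' (-1) (Or.inr rfl) x hx)
  · -- type-2 root
    have hve : v = vecR (Real.sqrt 3 / 2) (fun k => s k / 2) := hv
    rw [hve]
    exact reflect_t2 s hs (even_prod_one s hs he) x hx

lemma reflect_pp_mu (v : E6V) (hv : v ∈ PhiPlus) :
    reflectIn v muE6 ∈ ({muE6} : Set E6V) ∪ Fam2 := by
  rcases hv with ⟨i, j, hi, hij, hv | hv⟩ | ⟨s, hs, he, hv⟩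
  · induction i using Fin.cases with
    | zero => simp at hi
    | succ i' =>
      induction j using Fin.cases with
      | zero => exact absurd hij (by simp [Fin.not_lt, Fin.zero_le])
      | succ j' =>
        have hij' : i' ≠ j' := ne_of_lt (by rwa [Fin.succ_lt_succ_iff] at hij)
        have hve : v = vecR 0 (wfun i' j' 1) := by
          rw [hv, ← stdE_comb i' j' 1, one_smul]
        rw [hve]
        exact reflect_t1 i' j' hij' 1 (Or.inl rfl) muE6 (Or.inl rfl)
  · induction i using Fin.cases with
    | zero => simp at hi
    | succ i' =>
      induction j using Fin.cases with
      | zero => exact absurd hij (by simp [Fin.not_lt, Fin.zero_le])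
      | succ j' =>
        have hij' : i' ≠ j' := ne_of_lt (by rwa [Fin.succ_lt_succ_iff] at hij)
        have hve : v = vecR 0 (wfun i' j' (-1)) := by
          rw [hv, ← stdE_comb i' j' (-1), neg_one_smul, ← sub_eq_add_neg]
        rw [hve]
        exact reflect_t1 i' j' hij' (-1) (Or.inr rfl) muE6 (Or.inl rfl)
  · have hve : v = vecR (Real.sqrt 3 / 2) (fun k => s k / 2) := hv
    rw [hve]
    exact reflect_t2_mu s hs (even_prod_one s hs he)

lemma phi_reduce (v : E6V) (hv : v ∈ Phi) : ∃ v' ∈ PhiPlus, ∀ x, reflectIn v x = reflectIn v' x := by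
  rcases hv with hv | hv
  · exact ⟨v, hv, fun _ => rfl⟩
  · refine ⟨-v, hv, fun x => ?_⟩
    rw [← reflect_neg (-v) x, neg_neg]

lemma reflect_mu_mem (v : E6V) (hv : v ∈ Phi) :
    reflectIn v muE6 ∈ ({muE6} : Set E6V) ∪ Fam2 := by
  obtain ⟨v', hv', he⟩ := phi_reduce v hv
  rw [he]
  exact reflect_pp_mu v' hv'

lemma reflect_L1 (v : E6V) (hv : v ∈ Phi) (x : E6V)
    (hx : x ∈ ({muE6} : Set E6V) ∪ Fam2) : reflectIn v x ∈ LL := by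
  obtain ⟨v', hv', he⟩ := phi_reduce v hv
  rw [he]
  exact reflect_pp v' hv' x hx

lemma SigmaE6_subset_LL : SigmaE6 ⊆ LL := by
  intro x hx
  rcases hx with (hx | ⟨v, hv, hxe⟩) | ⟨v, hv, w, hw, hxe⟩
  · rw [Set.mem_singleton_iff.mp hx]
    exact Set.mem_union_left _ (Set.mem_union_left _ rfl)
  · rw [hxe]
    exact Set.mem_union_left _ (reflect_mu_mem v hv)
  · rw [hxe]
    exact reflect_L1 v hv _ (reflect_mu_mem w hw)


/-! ### Integer coordinates -/

def VecZ (z : Fin 6 → ℝ) : E6V :=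
  toE ![Real.sqrt 3 / 6 * z 0, (z 0 - 2*z 1)/2, (z 0 - 2*z 2)/2, (z 0 - 2*z 3)/2,
    (z 0 - 2*z 4)/2, (-z 0 + 2*(z 1 + z 2 + z 3 + z 4) - 4*z 5)/2]

def Fm (x : E6V) : Fin 6 → ℝ :=
  ![2*Real.sqrt 3 * x 0, Real.sqrt 3 * x 0 - x 1, Real.sqrt 3 * x 0 - x 2,
    Real.sqrt 3 * x 0 - x 3, Real.sqrt 3 * x 0 - x 4,
    3*Real.sqrt 3/2 * x 0 - (x 1 + x 2 + x 3 + x 4 + x 5)/2]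

lemma Fm_VecZ (z : Fin 6 → ℝ) (i : Fin 6) : Fm (VecZ z) i = z i := by
  have h3 := sqrt3_sq
  fin_cases i
  · show 2*Real.sqrt 3 * (Real.sqrt 3 / 6 * z 0) = z 0
    linear_combination (z 0 / 3) * h3
  · show Real.sqrt 3 * (Real.sqrt 3 / 6 * z 0) - (z 0 - 2*z 1)/2 = z 1
    linear_combination (z 0 / 6) * h3
  · show Real.sqrt 3 * (Real.sqrt 3 / 6 * z 0) - (z 0 - 2*z 2)/2 = z 2
    linear_combination (z 0 / 6) * h3
  · show Real.sqrt 3 * (Real.sqrt 3 / 6 * z 0) - (z 0 - 2*z 3)/2 = z 3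
    linear_combination (z 0 / 6) * h3
  · show Real.sqrt 3 * (Real.sqrt 3 / 6 * z 0) - (z 0 - 2*z 4)/2 = z 4
    linear_combination (z 0 / 6) * h3
  · show 3*Real.sqrt 3/2 * (Real.sqrt 3 / 6 * z 0) -
      ((z 0 - 2*z 1)/2 + (z 0 - 2*z 2)/2 + (z 0 - 2*z 3)/2 + (z 0 - 2*z 4)/2 +
        (-z 0 + 2*(z 1 + z 2 + z 3 + z 4) - 4*z 5)/2)/2 = z 5
    linear_combination (z 0 / 4) * h3

def bi (b : Bool) : ℤ := if b then 1 else 0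
def br (b : Bool) : ℝ := if b then -1 else 1
def zOfB (b : Fin 5 → Bool) : Fin 6 → ℤ :=
  ![1, bi (b 0), bi (b 1), bi (b 2), bi (b 3),
    (bi (b 0) + bi (b 1) + bi (b 2) + bi (b 3) + bi (b 4) - 1)/2]
def dz : Fin 3 → ℤ := ![0, 1, -1]
def zOfC (c : Fin 5 → Fin 3) : Fin 6 → ℤ :=
  ![-2, -1 - dz (c 0), -1 - dz (c 1), -1 - dz (c 2), -1 - dz (c 3),
    (-3 - (dz (c 0) + dz (c 1) + dz (c 2) + dz (c 3) + dz (c 4)))/2]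

def Z27 : List (Fin 6 → ℤ) :=
  [![4, 2, 2, 2, 2, 3],
   ![1, 0, 0, 0, 0, 0], ![1, 0, 0, 0, 1, 0], ![1, 0, 0, 1, 0, 0], ![1, 0, 0, 1, 1, 1],
   ![1, 0, 1, 0, 0, 0], ![1, 0, 1, 0, 1, 1], ![1, 0, 1, 1, 0, 1], ![1, 0, 1, 1, 1, 1],
   ![1, 1, 0, 0, 0, 0], ![1, 1, 0, 0, 1, 1], ![1, 1, 0, 1, 0, 1], ![1, 1, 0, 1, 1, 1],
   ![1, 1, 1, 0, 0, 1], ![1, 1, 1, 0, 1, 1], ![1, 1, 1, 1, 0, 1], ![1, 1, 1, 1, 1, 2],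
   ![-2, -2, -1, -1, -1, -2], ![-2, 0, -1, -1, -1, -1], ![-2, -1, -2, -1, -1, -2],
   ![-2, -1, 0, -1, -1, -1], ![-2, -1, -1, -2, -1, -2], ![-2, -1, -1, 0, -1, -1],
   ![-2, -1, -1, -1, -2, -2], ![-2, -1, -1, -1, 0, -1], ![-2, -1, -1, -1, -1, -2],
   ![-2, -1, -1, -1, -1, -1]]

lemma mem2 : ∀ b : Fin 5 → Bool,
    (bi (b 0) + bi (b 1) + bi (b 2) + bi (b 3) + bi (b 4)) % 2 = 1 → zOfB b ∈ Z27 := by decide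

lemma mem3 : ∀ c : Fin 5 → Fin 3,
    dz (c 0)^2 + dz (c 1)^2 + dz (c 2)^2 + dz (c 3)^2 + dz (c 4)^2 = 1 → zOfC c ∈ Z27 := by decide

lemma odd3 : ∀ c : Fin 5 → Fin 3,
    dz (c 0)^2 + dz (c 1)^2 + dz (c 2)^2 + dz (c 3)^2 + dz (c 4)^2 = 1 →
    (dz (c 0) + dz (c 1) + dz (c 2) + dz (c 3) + dz (c 4)) % 2 = 1 := by decide

lemma distinct27 : ∀ z₁ ∈ Z27, ∀ z₂ ∈ Z27,
    (∀ i, (z₁ i - z₂ i) % 2 = 0) → z₁ = z₂ := by decide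

lemma par2 : ∀ b : Fin 5 → Bool, (∏ k, br (b k)) = -1 →
    (bi (b 0) + bi (b 1) + bi (b 2) + bi (b 3) + bi (b 4)) % 2 = 1 := by
  intro b hp
  rcases Bool.eq_false_or_eq_true (b 0) with h0|h0 <;>
    rcases Bool.eq_false_or_eq_true (b 1) with h1|h1 <;>
    rcases Bool.eq_false_or_eq_true (b 2) with h2|h2 <;>
    rcases Bool.eq_false_or_eq_true (b 3) with h3|h3 <;>
    rcases Bool.eq_false_or_eq_true (b 4) with h4|h4 <;>
  first
  | (rw [h0, h1, h2, h3, h4]; decide)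
  | (exfalso; rw [Fin.prod_univ_five, h0, h1, h2, h3, h4] at hp; norm_num [br] at hp)

/-! ### Classification of `LL` by integer vectors -/

lemma classify : ∀ x ∈ LL, ∃ z ∈ Z27, x = VecZ (fun i => ((z i : ℤ) : ℝ)) := by
  rintro x ((hx | ⟨u, hu, hup, hxe⟩) | ⟨t, ht, hsq, hxe⟩)
  · -- μ
    refine ⟨![4, 2, 2, 2, 2, 3], by decide, ?_⟩
    rw [Set.mem_singleton_iff.mp hx]
    refine toE_inj fun i => ?_
    fin_cases i
    · show 2 * Real.sqrt 3 / 3 = Real.sqrt 3 / 6 * ((4:ℤ):ℝ)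
      push_cast; ring
    · show (0:ℝ) = (((4:ℤ):ℝ) - 2*((2:ℤ):ℝ))/2
      push_cast; ring
    · show (0:ℝ) = (((4:ℤ):ℝ) - 2*((2:ℤ):ℝ))/2
      push_cast; ring
    · show (0:ℝ) = (((4:ℤ):ℝ) - 2*((2:ℤ):ℝ))/2
      push_cast; ring
    · show (0:ℝ) = (((4:ℤ):ℝ) - 2*((2:ℤ):ℝ))/2
      push_cast; ring
    · show (0:ℝ) = (-((4:ℤ):ℝ) + 2*(((2:ℤ):ℝ) + ((2:ℤ):ℝ) + ((2:ℤ):ℝ) + ((2:ℤ):ℝ)) - 4*((3:ℤ):ℝ))/2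
      push_cast; ring
  · -- Fam2
    have hb : ∀ k, ∃ bk : Bool, u k = br bk := by
      intro k
      rcases hu k with h|h
      · exact ⟨false, by rw [h]; rfl⟩
      · exact ⟨true, by rw [h]; rfl⟩
    choose b hbe using hb
    have hup' : (∏ k, br (b k)) = -1 := by
      rw [← Finset.prod_congr rfl fun k _ => hbe k]; exact hup
    have hm := par2 b hup'
    refine ⟨zOfB b, mem2 b hm, ?_⟩
    rw [hxe]
    have hq : 2 * ((bi (b 0) + bi (b 1) + bi (b 2) + bi (b 3) + bi (b 4) - 1)/2)
        = bi (b 0) + bi (b 1) + bi (b 2) + bi (b 3) + bi (b 4) - 1 := by omega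
    have hqr : ((((bi (b 0) + bi (b 1) + bi (b 2) + bi (b 3) + bi (b 4) - 1)/2 : ℤ)) : ℝ)
        = (((bi (b 0) : ℝ)) + (bi (b 1) : ℝ) + (bi (b 2) : ℝ) + (bi (b 3) : ℝ) + (bi (b 4) : ℝ) - 1)/2 := by
      rw [eq_div_iff (by norm_num : (2:ℝ) ≠ 0), mul_comm]
      exact_mod_cast congrArg (fun n : ℤ => (n : ℝ)) hq
    refine toE_inj fun i => ?_
    fin_cases i
    · show Real.sqrt 3 / 6 = Real.sqrt 3 / 6 * ((zOfB b 0 : ℤ) : ℝ)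
      show Real.sqrt 3 / 6 = Real.sqrt 3 / 6 * ((1 : ℤ) : ℝ)
      push_cast; ring
    · show u 0 / 2 = (((zOfB b 0 : ℤ):ℝ) - 2*((zOfB b 1 : ℤ):ℝ))/2
      show u 0 / 2 = (((1 : ℤ):ℝ) - 2*((bi (b 0) : ℤ):ℝ))/2
      rw [hbe 0]; cases b 0 <;> simp [bi, br] <;> norm_num
    · show u 1 / 2 = (((1 : ℤ):ℝ) - 2*((bi (b 1) : ℤ):ℝ))/2
      rw [hbe 1]; cases b 1 <;> simp [bi, br] <;> norm_num
    · show u 2 / 2 = (((1 : ℤ):ℝ) - 2*((bi (b 2) : ℤ):ℝ))/2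
      rw [hbe 2]; cases b 2 <;> simp [bi, br] <;> norm_num
    · show u 3 / 2 = (((1 : ℤ):ℝ) - 2*((bi (b 3) : ℤ):ℝ))/2
      rw [hbe 3]; cases b 3 <;> simp [bi, br] <;> norm_num
    · show u 4 / 2 = (-((1 : ℤ):ℝ) + 2*(((bi (b 0) : ℤ):ℝ) + ((bi (b 1) : ℤ):ℝ)
          + ((bi (b 2) : ℤ):ℝ) + ((bi (b 3) : ℤ):ℝ))
          - 4*((((bi (b 0) + bi (b 1) + bi (b 2) + bi (b 3) + bi (b 4) - 1)/2 : ℤ)) : ℝ))/2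
      rw [hbe 4, hqr]
      cases b 4 <;> simp [bi, br] <;> push_cast <;> ring
  · -- Fam3
    have hc : ∀ k, ∃ ck : Fin 3, t k = ((dz ck : ℤ) : ℝ) := by
      intro k
      rcases ht k with h|h|h
      · exact ⟨0, by rw [h]; norm_num [dz]⟩
      · exact ⟨1, by rw [h]; norm_num [dz]⟩
      · exact ⟨2, by rw [h]; show (-1:ℝ) = ((-1:ℤ):ℝ); norm_num⟩
    choose c hce using hc
    have hz : dz (c 0)^2 + dz (c 1)^2 + dz (c 2)^2 + dz (c 3)^2 + dz (c 4)^2 = 1 := by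
      have : (∑ k, t k ^ 2)
          = (((dz (c 0)^2 + dz (c 1)^2 + dz (c 2)^2 + dz (c 3)^2 + dz (c 4)^2 : ℤ)) : ℝ) := by
        rw [Fin.sum_univ_five, hce 0, hce 1, hce 2, hce 3, hce 4]
        push_cast; ring
      rw [this] at hsq
      exact_mod_cast hsq
    have hodd := odd3 c hz
    refine ⟨zOfC c, mem3 c hz, ?_⟩
    rw [hxe]
    have hq : 2 * ((-3 - (dz (c 0) + dz (c 1) + dz (c 2) + dz (c 3) + dz (c 4)))/2)
        = -3 - (dz (c 0) + dz (c 1) + dz (c 2) + dz (c 3) + dz (c 4)) := by omega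
    have hqr : ((((-3 - (dz (c 0) + dz (c 1) + dz (c 2) + dz (c 3) + dz (c 4)))/2 : ℤ)) : ℝ)
        = (-3 - (((dz (c 0) : ℝ)) + (dz (c 1) : ℝ) + (dz (c 2) : ℝ) + (dz (c 3) : ℝ) + (dz (c 4) : ℝ)))/2 := by
      rw [eq_div_iff (by norm_num : (2:ℝ) ≠ 0), mul_comm]
      exact_mod_cast congrArg (fun n : ℤ => (n : ℝ)) hq
    refine toE_inj fun i => ?_
    fin_cases i
    · show -(Real.sqrt 3 / 3) = Real.sqrt 3 / 6 * (((-2 : ℤ)) : ℝ)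
      push_cast; ring
    · show t 0 = ((((-2:ℤ)):ℝ) - 2*(((-1 - dz (c 0) : ℤ)):ℝ))/2
      rw [hce 0]; push_cast; ring
    · show t 1 = ((((-2:ℤ)):ℝ) - 2*(((-1 - dz (c 1) : ℤ)):ℝ))/2
      rw [hce 1]; push_cast; ring
    · show t 2 = ((((-2:ℤ)):ℝ) - 2*(((-1 - dz (c 2) : ℤ)):ℝ))/2
      rw [hce 2]; push_cast; ring
    · show t 3 = ((((-2:ℤ)):ℝ) - 2*(((-1 - dz (c 3) : ℤ)):ℝ))/2
      rw [hce 3]; push_cast; ring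
    · show t 4 = (-(((-2:ℤ)):ℝ) + 2*((((-1 - dz (c 0) : ℤ)):ℝ) + (((-1 - dz (c 1) : ℤ)):ℝ)
          + (((-1 - dz (c 2) : ℤ)):ℝ) + (((-1 - dz (c 3) : ℤ)):ℝ))
          - 4*((((-3 - (dz (c 0) + dz (c 1) + dz (c 2) + dz (c 3) + dz (c 4)))/2 : ℤ)) : ℝ))/2
      rw [hce 4, hqr]
      push_cast; ring


/-! ### Final assembly -/

lemma Fm_add (x y : E6V) (i : Fin 6) : Fm (x + y) i = Fm x i + Fm y i := by
  fin_cases i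
  · show 2*Real.sqrt 3 * (x 0 + y 0) = 2*Real.sqrt 3 * x 0 + 2*Real.sqrt 3 * y 0
    ring
  · show Real.sqrt 3 * (x 0 + y 0) - (x 1 + y 1)
        = (Real.sqrt 3 * x 0 - x 1) + (Real.sqrt 3 * y 0 - y 1)
    ring
  · show Real.sqrt 3 * (x 0 + y 0) - (x 2 + y 2)
        = (Real.sqrt 3 * x 0 - x 2) + (Real.sqrt 3 * y 0 - y 2)
    ring
  · show Real.sqrt 3 * (x 0 + y 0) - (x 3 + y 3)
        = (Real.sqrt 3 * x 0 - x 3) + (Real.sqrt 3 * y 0 - y 3)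
    ring
  · show Real.sqrt 3 * (x 0 + y 0) - (x 4 + y 4)
        = (Real.sqrt 3 * x 0 - x 4) + (Real.sqrt 3 * y 0 - y 4)
    ring
  · show 3*Real.sqrt 3/2 * (x 0 + y 0) - ((x 1 + y 1) + (x 2 + y 2) + (x 3 + y 3)
        + (x 4 + y 4) + (x 5 + y 5))/2
        = (3*Real.sqrt 3/2 * x 0 - (x 1 + x 2 + x 3 + x 4 + x 5)/2)
          + (3*Real.sqrt 3/2 * y 0 - (y 1 + y 2 + y 3 + y 4 + y 5)/2)
    ring

lemma Fm_neg (x : E6V) (i : Fin 6) : Fm (-x) i = -Fm x i := by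
  fin_cases i
  · show 2*Real.sqrt 3 * (-(x 0)) = -(2*Real.sqrt 3 * x 0)
    ring
  · show Real.sqrt 3 * (-(x 0)) - (-(x 1)) = -(Real.sqrt 3 * x 0 - x 1)
    ring
  · show Real.sqrt 3 * (-(x 0)) - (-(x 2)) = -(Real.sqrt 3 * x 0 - x 2)
    ring
  · show Real.sqrt 3 * (-(x 0)) - (-(x 3)) = -(Real.sqrt 3 * x 0 - x 3)
    ring
  · show Real.sqrt 3 * (-(x 0)) - (-(x 4)) = -(Real.sqrt 3 * x 0 - x 4)
    ring
  · show 3*Real.sqrt 3/2 * (-(x 0)) - ((-(x 1)) + (-(x 2)) + (-(x 3)) + (-(x 4)) + (-(x 5)))/2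
        = -(3*Real.sqrt 3/2 * x 0 - (x 1 + x 2 + x 3 + x 4 + x 5)/2)
    ring

lemma Fm_zero (i : Fin 6) : Fm (0 : E6V) i = 0 := by
  fin_cases i
  · show 2*Real.sqrt 3 * (0:ℝ) = 0
    ring
  · show Real.sqrt 3 * (0:ℝ) - 0 = 0
    ring
  · show Real.sqrt 3 * (0:ℝ) - 0 = 0
    ring
  · show Real.sqrt 3 * (0:ℝ) - 0 = 0
    ring
  · show Real.sqrt 3 * (0:ℝ) - 0 = 0
    ring
  · show 3*Real.sqrt 3/2 * (0:ℝ) - ((0:ℝ) + 0 + 0 + 0 + 0)/2 = 0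
    ring

lemma Fm_sub (x y : E6V) (i : Fin 6) : Fm (x - y) i = Fm x i - Fm y i := by
  rw [sub_eq_add_neg, Fm_add, Fm_neg]; ring

lemma Fm_int_on_closure :
    ∀ x ∈ AddSubgroup.closure SigmaE6, ∀ i, ∃ n : ℤ, Fm x i = (n : ℝ) := by
  intro x hx
  induction hx using AddSubgroup.closure_induction with
  | mem y hy =>
    obtain ⟨z, _, hze⟩ := classify y (SigmaE6_subset_LL hy)
    intro i
    exact ⟨z i, by rw [hze, Fm_VecZ]⟩
  | zero => exact fun i => ⟨0, by rw [Fm_zero]; norm_num⟩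
  | add a b ha hb iha ihb =>
    intro i
    obtain ⟨n, hn⟩ := iha i
    obtain ⟨m, hm⟩ := ihb i
    exact ⟨n + m, by rw [Fm_add, hn, hm]; push_cast; ring⟩
  | neg a ha iha =>
    intro i
    obtain ⟨n, hn⟩ := iha i
    exact ⟨-n, by rw [Fm_neg, hn]; push_cast; ring⟩


/-- Let `Λ` be the additive subgroup generated by `Σ` (the weight lattice).
Distinct elements of `Σ` remain distinct modulo `2Λ`: for distinct
`λ₁, λ₂ ∈ Σ`, the difference `λ₁ − λ₂` is not of the form `x + x` with `x ∈ Λ`. -/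
theorem e6_sigma_injects_mod_two :
    ∀ l₁ ∈ SigmaE6, ∀ l₂ ∈ SigmaE6, l₁ ≠ l₂ →
      ¬ ∃ x ∈ AddSubgroup.closure SigmaE6, l₁ - l₂ = x + x := by
  intro l₁ h₁ l₂ h₂ hne
  rintro ⟨x, hx, heq⟩
  obtain ⟨z₁, hz₁m, hz₁e⟩ := classify l₁ (SigmaE6_subset_LL h₁)
  obtain ⟨z₂, hz₂m, hz₂e⟩ := classify l₂ (SigmaE6_subset_LL h₂)
  have key : ∀ i, (z₁ i - z₂ i) % 2 = 0 := by
    intro i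
    obtain ⟨n, hn⟩ := Fm_int_on_closure x hx i
    have e1 : Fm l₁ i - Fm l₂ i = 2 * (n : ℝ) := by
      rw [← Fm_sub, heq, Fm_add, hn]; ring
    rw [hz₁e, hz₂e, Fm_VecZ, Fm_VecZ] at e1
    have e2 : z₁ i - z₂ i = 2 * n := by exact_mod_cast e1
    omega
  exact hne (by rw [hz₁e, hz₂e, distinct27 z₁ hz₁m z₂ hz₂m key])

end
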